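/- Let (X, 𝒜, μ) be a measure space and f, g zero-divisors. Then f and g are adjacent to the same set of vertices in the comaximal graph (i.e., for every zero-divisor h, μ(Z(f) ∩ Z(h)) = 0 ↔ μ(Z(g) ∩ Z(h)) = 0) if and only if μ(Z(f) △ Z(g)) = 0. -/

import Mathlib

open MeasureTheory Set

def IsZeroDiv {X : Type*} [MeasurableSpace X] (μ : Measure X) (f : X → ℝ) : Prop :=
  Measurable f ∧ 0 < μ {x | f x = 0} ∧ 0 < μ {x | f x = 0}ᶜ

theorem same_neighbors_iff_symmDiff_null {X : Type*} [MeasurableSpace X]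
    (μ : Measure X) (f g : X → ℝ) (hf : IsZeroDiv μ f) (hg : IsZeroDiv μ g) :
    (∀ h : X → ℝ, IsZeroDiv μ h →
        (μ ({x | f x = 0} ∩ {x | h x = 0}) = 0 ↔
          μ ({x | g x = 0} ∩ {x | h x = 0}) = 0)) ↔
      μ (symmDiff {x | f x = 0} {x | g x = 0}) = 0 := by
  set Zf := {x | f x = 0} with hZf
  set Zg := {x | g x = 0} with hZg
  constructor
  · intro H
    have mk : ∀ (φ : X → ℝ), IsZeroDiv μ φ →
        ∃ ψ : X → ℝ, IsZeroDiv μ ψ ∧ {x | ψ x = 0} = {x | φ x = 0}ᶜ := by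
      intro φ hφ
      refine ⟨fun x => if φ x = 0 then 1 else 0, ?_, ?_⟩
      · have hset : {x | (if φ x = 0 then (1:ℝ) else 0) = 0} = {x | φ x = 0}ᶜ := by
          ext x; by_cases h : φ x = 0 <;> simp [h]
        refine ⟨Measurable.ite (hφ.1 (measurableSet_singleton 0)) measurable_const
          measurable_const, ?_, ?_⟩
        · rw [hset]; exact hφ.2.2
        · rw [hset, compl_compl]; exact hφ.2.1
      · ext x; by_cases h : φ x = 0 <;> simp [h]
    obtain ⟨ψf, hψf, hψfz⟩ := mk f hf
    obtain ⟨ψg, hψg, hψgz⟩ := mk g hg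
    have e1 : μ (Zg ∩ Zfᶜ) = 0 := by
      have := (H ψf hψf).mp (by rw [hψfz]; simp [hZf])
      rw [hψfz] at this; exact this
    have e2 : μ (Zf ∩ Zgᶜ) = 0 := by
      have := (H ψg hψg).mpr (by rw [hψgz]; simp [hZg])
      rw [hψgz] at this; exact this
    rw [Set.symmDiff_def]
    exact measure_union_null (by rwa [Set.diff_eq]) (by rwa [Set.diff_eq])
  · intro H h hh
    have h1 : μ (Zf \ Zg) = 0 :=
      measure_mono_null (by rw [Set.symmDiff_def]; exact subset_union_left) H
    have h2 : μ (Zg \ Zf) = 0 :=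
      measure_mono_null (by rw [Set.symmDiff_def]; exact subset_union_right) H
    constructor
    · intro hfz
      have : Zg ∩ {x | h x = 0} ⊆ (Zf ∩ {x | h x = 0}) ∪ (Zg \ Zf) := by
        intro x ⟨hx1, hx2⟩
        by_cases hx : x ∈ Zf
        · exact Or.inl ⟨hx, hx2⟩
        · exact Or.inr ⟨hx1, hx⟩
      exact measure_mono_null this (measure_union_null hfz h2)
    · intro hgz
      have : Zf ∩ {x | h x = 0} ⊆ (Zg ∩ {x | h x = 0}) ∪ (Zf \ Zg) := by
        intro x ⟨hx1, hx2⟩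
        by_cases hx : x ∈ Zg
        · exact Or.inl ⟨hx, hx2⟩
        · exact Or.inr ⟨hx1, hx⟩
      exact measure_mono_null this (measure_union_null hgz h1)
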